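/- Let G be a König-Egerváry graph. Then α(G) + σ(G) = μ(G) + ξ(G), where ξ(G) is the number of vertices belonging to all maximum stable sets of G and σ(G) is the number of vertices belonging to no maximum stable set of G. -/

import Mathlib

open scoped Classical

namespace KEG

variable {V : Type*}

/-- `S` is a stable (independent) set of vertices of `G`. -/
def IsStable (G : SimpleGraph V) (S : Finset V) : Prop :=
  ∀ ⦃x⦄, x ∈ S → ∀ ⦃y⦄, y ∈ S → ¬G.Adj x y

/-- The stability number `α(G)`: maximum cardinality of a stable set. -/
noncomputable def alphaNum (G : SimpleGraph V) : ℕ :=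
  sSup {n | ∃ S : Finset V, IsStable G S ∧ S.card = n}

/-- `S` is a maximum stable set of `G`. -/
def IsMaxStable (G : SimpleGraph V) (S : Finset V) : Prop :=
  IsStable G S ∧ S.card = alphaNum G

/-- `M` is a matching of `G`: a set of edges of `G`, pairwise non-incident. -/
def IsMatching (G : SimpleGraph V) (M : Finset (Sym2 V)) : Prop :=
  (∀ e ∈ M, e ∈ G.edgeSet) ∧
    ∀ e ∈ M, ∀ f ∈ M, e ≠ f → ∀ v : V, v ∈ e → v ∉ f

/-- The matching number `μ(G)`: maximum cardinality of a matching. -/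
noncomputable def muNum (G : SimpleGraph V) : ℕ :=
  sSup {n | ∃ M : Finset (Sym2 V), IsMatching G M ∧ M.card = n}

/-- A perfect matching: a matching covering every vertex. -/
def IsPerfectMatching (G : SimpleGraph V) (M : Finset (Sym2 V)) : Prop :=
  IsMatching G M ∧ ∀ v : V, ∃ e ∈ M, v ∈ e

/-- A maximal matching: a matching such that no edge of `G` can be added to it
while keeping pairwise non-incidence, i.e. every edge of `G` outside `M` is
incident to an edge of `M`. -/
def IsMaximalMatching (G : SimpleGraph V) (M : Finset (Sym2 V)) : Prop :=
  IsMatching G M ∧ ∀ e ∈ G.edgeSet, e ∉ M → ∃ f ∈ M, ∃ v : V, v ∈ e ∧ v ∈ f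

/-- `G` is a König-Egerváry graph: `α(G) + μ(G) = |V(G)|`. -/
def KonigEgervary (G : SimpleGraph V) [Fintype V] : Prop :=
  alphaNum G + muNum G = Fintype.card V

/-- `e` is an α-critical edge of `G`: `α(G - e) > α(G)`. -/
def IsAlphaCritical (G : SimpleGraph V) (e : Sym2 V) : Prop :=
  e ∈ G.edgeSet ∧ alphaNum G < alphaNum (G.deleteEdges {e})

/-- `e` is a μ-critical edge of `G`: `μ(G - e) < μ(G)`. -/
def IsMuCritical (G : SimpleGraph V) (e : Sym2 V) : Prop :=
  e ∈ G.edgeSet ∧ muNum (G.deleteEdges {e}) < muNum G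

/-- `core(G)`: the set of vertices belonging to every maximum stable set of `G`. -/
def core (G : SimpleGraph V) : Set V :=
  {v | ∀ S : Finset V, IsMaxStable G S → v ∈ S}

/-- `ξ(G) = |core(G)|`. -/
noncomputable def xi (G : SimpleGraph V) : ℕ := (core G).ncard

/-- `σ(G)`: the number of vertices belonging to no maximum stable set of `G`. -/
noncomputable def sigmaNum (G : SimpleGraph V) : ℕ :=
  {v : V | ∀ S : Finset V, IsMaxStable G S → v ∉ S}.ncard

/-- `η(G)`: the number of α-critical edges of `G`. -/
noncomputable def eta (G : SimpleGraph V) : ℕ :=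
  {e : Sym2 V | IsAlphaCritical G e}.ncard

/-- `N(A)`: the set of vertices adjacent to some vertex of `A`. -/
def nbhd (G : SimpleGraph V) (A : Set V) : Set V :=
  {v | ∃ a ∈ A, G.Adj a v}

/-- `N[A] = A ∪ N(A)`: the closed neighborhood of `A`. -/
def closedNbhd (G : SimpleGraph V) (A : Set V) : Set V :=
  A ∪ nbhd G A


lemma sym2_three {x y z : V} {e : Sym2 V} (hx : x ∈ e) (hy : y ∈ e) (hz : z ∈ e)
    (hyx : y ≠ x) (hzx : z ≠ x) : y = z := by
  induction e using Sym2.inductionOn with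
  | hf a b =>
    rw [Sym2.mem_iff] at hx hy hz
    rcases hx with rfl | rfl <;> rcases hy with rfl | rfl <;> rcases hz with rfl | rfl <;> tauto

lemma exists_max_stable (G : SimpleGraph V) [Fintype V] :
    ∃ S : Finset V, IsMaxStable G S := by
  have hbdd : BddAbove {n | ∃ S : Finset V, IsStable G S ∧ S.card = n} :=
    ⟨Fintype.card V, fun n ⟨S, _, hS⟩ => hS ▸ S.card_le_univ⟩
  have hne : {n | ∃ S : Finset V, IsStable G S ∧ S.card = n}.Nonempty :=
    ⟨0, ∅, fun x hx => absurd hx (Finset.notMem_empty x), by simp⟩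
  obtain ⟨S, hS, hcard⟩ := Nat.sSup_mem hne hbdd
  exact ⟨S, hS, hcard⟩

lemma exists_max_matching (G : SimpleGraph V) [Fintype V] :
    ∃ M : Finset (Sym2 V), IsMatching G M ∧ M.card = muNum G := by
  have hbdd : BddAbove {n | ∃ M : Finset (Sym2 V), IsMatching G M ∧ M.card = n} :=
    ⟨Fintype.card (Sym2 V), fun n ⟨M, _, hM⟩ => hM ▸ M.card_le_univ⟩
  have hne : {n | ∃ M : Finset (Sym2 V), IsMatching G M ∧ M.card = n}.Nonempty :=
    ⟨0, ∅, ⟨fun e he => absurd he (Finset.notMem_empty e),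
      fun e he => absurd he (Finset.notMem_empty e)⟩, by simp⟩
  exact Nat.sSup_mem hne hbdd

/-- In a König-Egerváry graph, `α(G) + σ(G) = μ(G) + ξ(G)`. -/
theorem stmt_10 {V : Type*} [Fintype V] (G : SimpleGraph V)
    (hG : KonigEgervary G) :
    alphaNum G + sigmaNum G = muNum G + xi G := by
  rcases isEmpty_or_nonempty V with hE | hNe
  · have h0 : Fintype.card V = 0 := Fintype.card_eq_zero
    have hKE : alphaNum G + muNum G = Fintype.card V := hG
    have hs : sigmaNum G = 0 := by
      rw [sigmaNum, Set.eq_empty_of_isEmpty {v : V | ∀ S : Finset V, IsMaxStable G S → v ∉ S},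
        Set.ncard_empty]
    have hx : xi G = 0 := by
      rw [xi, Set.eq_empty_of_isEmpty (core G), Set.ncard_empty]
    omega
  set n := Fintype.card V with hn
  obtain ⟨M, hM, hMcard⟩ := exists_max_matching G
  -- key structural lemma
  have hL : ∀ T : Finset V, IsMaxStable G T → ∀ v, v ∉ T →
      ∃ e ∈ M, v ∈ e ∧ ∀ w, w ∈ e → w ≠ v → w ∈ T := by
    intro T hT v hv
    set g : Sym2 V → V := fun e => Classical.epsilon fun x => x ∈ e ∧ x ∉ T with hgdef
    have hg : ∀ e ∈ M, g e ∈ e ∧ g e ∉ T := by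
      intro e he
      have hedge := hM.1 e he
      have hex : ∃ x, x ∈ e ∧ x ∉ T := by
        revert hedge
        induction e using Sym2.inductionOn with
        | hf a b =>
          intro hedge
          rw [SimpleGraph.mem_edgeSet] at hedge
          by_contra hcon
          push_neg at hcon
          exact hT.1 (hcon a (by simp) ) (hcon b (by simp)) hedge
      simp only [hgdef]
      exact Classical.epsilon_spec hex
    have hinj : Set.InjOn g ↑M := by
      intro e he f hf hef
      by_contra hne
      exact hM.2 e (by simpa using he) f (by simpa using hf) hne (g e) (hg e (by simpa using he)).1
        (hef ▸ (hg f (by simpa using hf)).1)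
    have himg : M.image g = Tᶜ := by
      apply Finset.eq_of_subset_of_card_le
      · intro x hx
        obtain ⟨e, he, rfl⟩ := Finset.mem_image.1 hx
        exact Finset.mem_compl.2 (hg e he).2
      · rw [Finset.card_image_of_injOn hinj, Finset.card_compl, hT.2, hMcard]
        have := hG
        unfold KonigEgervary at this
        omega
    have hv' : v ∈ M.image g := himg ▸ Finset.mem_compl.2 hv
    obtain ⟨e, he, hge⟩ := Finset.mem_image.1 hv'
    refine ⟨e, he, hge ▸ (hg e he).1, ?_⟩
    intro w hw hwv
    by_contra hwT
    have hw' : w ∈ M.image g := himg ▸ Finset.mem_compl.2 hwT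
    obtain ⟨f, hf, hgf⟩ := Finset.mem_image.1 hw'
    have hef : f = e := by
      by_contra hne
      exact hM.2 f hf e he hne w (hgf ▸ (hg f hf).1) hw
    exact hwv (by rw [← hge, ← hgf, hef])
  -- covered vertices
  set covered : Finset V := Finset.univ.filter (fun v => ∃ e ∈ M, v ∈ e) with hcovdef
  have hmemcov : ∀ v, v ∈ covered ↔ ∃ e ∈ M, v ∈ e := by
    intro v; simp [hcovdef]
  have hcovcard : covered.card = 2 * M.card := by
    have hbi : covered = M.biUnion (fun e => Finset.univ.filter (· ∈ e)) := by
      ext v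
      simp [hcovdef]
    rw [hbi, Finset.card_biUnion]
    · have h2 : ∀ e ∈ M, (Finset.univ.filter (· ∈ e)).card = 2 := by
        intro e he
        have hedge := hM.1 e he
        revert hedge
        induction e using Sym2.inductionOn with
        | hf a b =>
          intro hedge
          rw [SimpleGraph.mem_edgeSet] at hedge
          have : Finset.univ.filter (· ∈ (s(a,b) : Sym2 V)) = {a, b} := by
            ext x; simp [Sym2.mem_iff]
          rw [this, Finset.card_insert_of_notMem (by simp [hedge.ne]), Finset.card_singleton]
      rw [Finset.sum_congr rfl h2, Finset.sum_const, smul_eq_mul]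
      ring
    · intro e he f hf hne
      rw [Function.onFun, Finset.disjoint_filter]
      intro v _ hve hvf
      exact hM.2 e he f hf hne v hve hvf
  -- partner function
  set p : V → V := fun v => Classical.epsilon fun w => w ≠ v ∧ ∃ e ∈ M, v ∈ e ∧ w ∈ e with hpdef
  have hp : ∀ v ∈ covered, p v ≠ v ∧ ∃ e ∈ M, v ∈ e ∧ p v ∈ e := by
    intro v hv
    obtain ⟨e, he, hve⟩ := (hmemcov v).1 hv
    have hedge := hM.1 e he
    have hex : ∃ w, w ≠ v ∧ ∃ e' ∈ M, v ∈ e' ∧ w ∈ e' := by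
      revert hedge hve
      induction e using Sym2.inductionOn with
      | hf a b =>
        intro hve hedge
        rw [SimpleGraph.mem_edgeSet] at hedge
        rcases Sym2.mem_iff.1 hve with rfl | rfl
        · exact ⟨b, hedge.ne', s(v, b), he, hve, by simp⟩
        · exact ⟨a, hedge.ne, s(a, v), he, hve, by simp⟩
    simp only [hpdef]
    exact Classical.epsilon_spec hex
  have huniq : ∀ {v w w' : V} {e f : Sym2 V}, e ∈ M → f ∈ M → v ∈ e → v ∈ f →
      w ∈ e → w' ∈ f → w ≠ v → w' ≠ v → w = w' := by
    intro v w w' e f he hf hve hvf hwe hwf hwv hw'v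
    have hef : e = f := by
      by_contra hne
      exact hM.2 e he f hf hne v hve hvf
    exact sym2_three hve hwe (hef ▸ hwf) hwv hw'v
  have hpcov : ∀ v ∈ covered, p v ∈ covered := by
    intro v hv
    obtain ⟨_, e, he, _, hpve⟩ := hp v hv
    exact (hmemcov (p v)).2 ⟨e, he, hpve⟩
  have hpp : ∀ v ∈ covered, p (p v) = v := by
    intro v hv
    obtain ⟨hne, e, he, hve, hpve⟩ := hp v hv
    obtain ⟨hne2, f, hf, h1, h2⟩ := hp (p v) (hpcov v hv)
    exact huniq hf he h1 hpve h2 hve hne2 (Ne.symm hne)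
  have hadj : ∀ v ∈ covered, G.Adj v (p v) := by
    intro v hv
    obtain ⟨hne, e, he, hve, hpve⟩ := hp v hv
    have hedge := hM.1 e he
    revert hedge hve hpve
    induction e using Sym2.inductionOn with
    | hf a b =>
      intro hve hpve hedge
      rw [SimpleGraph.mem_edgeSet] at hedge
      rcases Sym2.mem_iff.1 hve with rfl | rfl <;> rcases Sym2.mem_iff.1 hpve with h | h
      · exact absurd h hne
      · exact h ▸ hedge
      · exact h ▸ hedge.symm
      · exact absurd h hne
  -- core and D as finsets
  set K : Finset V := Finset.univ.filter (fun v => ∀ S : Finset V, IsMaxStable G S → v ∈ S)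
    with hKdef
  set D : Finset V := Finset.univ.filter (fun v => ∀ S : Finset V, IsMaxStable G S → v ∉ S)
    with hDdef
  have hxi : xi G = K.card := by
    have : core G = ↑K := by
      ext v; simp [core, hKdef]
    rw [xi, this, Set.ncard_coe_finset]
  have hsig : sigmaNum G = D.card := by
    have : {v : V | ∀ S : Finset V, IsMaxStable G S → v ∉ S} = ↑D := by
      ext v; simp [hDdef]
    rw [sigmaNum, this, Set.ncard_coe_finset]
  obtain ⟨S₀, hS₀⟩ := exists_max_stable G
  have hDcov : ∀ v ∈ D, v ∈ covered := by
    intro v hv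
    have hvn : v ∉ S₀ := (Finset.mem_filter.1 hv).2 S₀ hS₀
    obtain ⟨e, he, hve, -⟩ := hL S₀ hS₀ v hvn
    exact (hmemcov v).2 ⟨e, he, hve⟩
  have huncovK : ∀ v, v ∉ covered → v ∈ K := by
    intro v hv
    rw [hKdef, Finset.mem_filter]
    refine ⟨Finset.mem_univ v, ?_⟩
    intro S hS
    by_contra hvS
    obtain ⟨e, he, hve, -⟩ := hL S hS v hvS
    exact hv ((hmemcov v).2 ⟨e, he, hve⟩)
  -- bijection between D and K ∩ covered via p
  set KC : Finset V := K.filter (· ∈ covered) with hKCdef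
  have hDtoKC : ∀ v ∈ D, p v ∈ KC := by
    intro v hvD
    have hvcov := hDcov v hvD
    obtain ⟨hne, e, he, hve, hpve⟩ := hp v hvcov
    rw [hKCdef, Finset.mem_filter]
    refine ⟨?_, hpcov v hvcov⟩
    rw [hKdef, Finset.mem_filter]
    refine ⟨Finset.mem_univ _, ?_⟩
    intro S hS
    have hvn : v ∉ S := (Finset.mem_filter.1 hvD).2 S hS
    obtain ⟨f, hf, hvf, hoth⟩ := hL S hS v hvn
    have hef : e = f := by
      by_contra hnef
      exact hM.2 e he f hf hnef v hve hvf
    exact hoth (p v) (hef ▸ hpve) hne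
  have hKCtoD : ∀ v ∈ KC, p v ∈ D := by
    intro v hv
    rw [hKCdef, Finset.mem_filter] at hv
    obtain ⟨hvK, hvcov⟩ := hv
    rw [hDdef, Finset.mem_filter]
    refine ⟨Finset.mem_univ _, ?_⟩
    intro S hS hpvS
    have hvS : v ∈ S := (Finset.mem_filter.1 hvK).2 S hS
    exact hS.1 hvS hpvS (hadj v hvcov)
  have hcards : D.card = KC.card := by
    apply Finset.card_bij' (fun v _ => p v) (fun v _ => p v) hDtoKC hKCtoD
    · intro v hv
      exact hpp v (hDcov v hv)
    · intro v hv
      exact hpp v (Finset.mem_filter.1 ((hKCdef ▸ hv : v ∈ K.filter (· ∈ covered)))).2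
  -- split K
  have hKsplit : KC.card + coveredᶜ.card = K.card := by
    have h1 : K.filter (fun v => ¬ v ∈ covered) = coveredᶜ := by
      ext v
      simp only [Finset.mem_filter, Finset.mem_compl]
      constructor
      · rintro ⟨-, h⟩; exact h
      · intro h; exact ⟨huncovK v h, h⟩
    calc KC.card + coveredᶜ.card
        = (K.filter (· ∈ covered)).card + (K.filter (fun v => ¬ v ∈ covered)).card := by
          rw [h1, hKCdef]
      _ = K.card := Finset.card_filter_add_card_filter_not _
  have hcompl : coveredᶜ.card = n - covered.card := by
    rw [Finset.card_compl]
  have hcovle : covered.card ≤ n := Finset.card_le_univ covered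
  have hKE : alphaNum G + muNum G = n := hG
  rw [hxi, hsig]
  omega


end KEG
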